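/- Let A be a Noetherian integral domain with fraction field K, let I be an ideal of A generated by b₀ = f, b₁, …, b_s with f ≠ 0, let β : A[y₁, …, y_s] → K be the A-algebra homomorphism sending y_i to b_i/f (with image A' = A[I/f]), and let J' be the ideal of A[y₁, …, y_s] generated by the elements f·y_i − b_i, i = 1, …, s. Suppose that for every maximal ideal M of A, with S = A \ M, the localized modification is Davis with representative system b₀, …, b_s: the ideal generated by the elements f·y_i − b_i in (A_M)[y₁, …, y_s] is prime and equals the kernel of the induced map (A_M)[y₁, …, y_s] → K. Then A ↪ A' is a Davis modification: ker β = J' (and J' is prime). -/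
import Mathlib

set_option synthInstance.maxHeartbeats 1000000
set_option maxHeartbeats 1000000

/-- The ideal `J'` of the polynomial ring `B[y₁, …, y_s]` generated by the elements
`L_i = f·y_i − c_i`. -/
noncomputable def davisIdeal (B : Type*) [CommRing B] (s : ℕ) (f : B) (c : Fin s → B) :
    Ideal (MvPolynomial (Fin s) B) :=
  Ideal.span (Set.range fun i : Fin s =>
    MvPolynomial.C f * MvPolynomial.X i - MvPolynomial.C (c i))

/-- The `B`-algebra homomorphism `β : B[y₁, …, y_s] → K`, `y_i ↦ c_i/f`, whose image is
the affine modification `B[c₁/f, …, c_s/f] ⊆ K`. -/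
noncomputable def davisHom (B K : Type*) [CommRing B] [Field K] [Algebra B K] (s : ℕ)
    (f : B) (c : Fin s → B) : MvPolynomial (Fin s) B →ₐ[B] K :=
  MvPolynomial.aeval fun i => algebraMap B K (c i) / algebraMap B K f

/-- The localization of `A` at the multiplicative set `A \ M`, realized inside the
fraction field `K` as the `A`-subalgebra generated by the inverses `1/s`, `s ∉ M`;
for a maximal ideal `M` this is the local ring `A_M` viewed inside `K`. -/
def locAway (A K : Type*) [CommRing A] [Field K] [Algebra A K] (T : Set A) :
    Subalgebra A K :=
  Algebra.adjoin A ((fun t => (algebraMap A K t)⁻¹) '' T)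

section aux
variable {A K : Type*} [CommRing A] [Field K] [Algebra A K] [IsFractionRing A K]

lemma locAway_rep (M : Ideal A) (hM : M.IsPrime) {x : K}
    (hx : x ∈ locAway A K {a : A | a ∉ M}) :
    ∃ t a : A, t ∉ M ∧ algebraMap A K t * x = algebraMap A K a := by
  induction hx using Algebra.adjoin_induction with
  | mem x hx =>
      obtain ⟨t, ht, rfl⟩ := hx
      refine ⟨t, 1, ht, ?_⟩
      rw [map_one, mul_inv_cancel₀]
      exact (map_ne_zero_iff _ (IsFractionRing.injective A K)).2
        (fun h0 => ht (by simp only [h0, Set.mem_setOf_eq] at *; exact M.zero_mem))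
  | algebraMap a =>
      exact ⟨1, a, fun h1 => hM.ne_top (M.eq_top_iff_one.2 h1), by simp⟩
  | add x y hx hy ihx ihy =>
      obtain ⟨t, a, ht, hta⟩ := ihx
      obtain ⟨t', a', ht', hta'⟩ := ihy
      refine ⟨t * t', a * t' + a' * t, fun hmem => ((hM.mem_or_mem hmem).elim ht ht'), ?_⟩
      have : algebraMap A K (t * t') * (x + y) =
          algebraMap A K t' * (algebraMap A K t * x) +
          algebraMap A K t * (algebraMap A K t' * y) := by
        rw [map_mul]; ring
      rw [this, hta, hta', map_add, map_mul, map_mul]; ring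
  | mul x y hx hy ihx ihy =>
      obtain ⟨t, a, ht, hta⟩ := ihx
      obtain ⟨t', a', ht', hta'⟩ := ihy
      refine ⟨t * t', a * a', fun hmem => ((hM.mem_or_mem hmem).elim ht ht'), ?_⟩
      have : algebraMap A K (t * t') * (x * y) =
          (algebraMap A K t * x) * (algebraMap A K t' * y) := by
        rw [map_mul]; ring
      rw [this, hta, hta', map_mul]

open MvPolynomial in
lemma clear_denoms (M : Ideal A) (hM : M.IsPrime) {s : ℕ}
    (g : MvPolynomial (Fin s) ↥(locAway A K {a : A | a ∉ M})) :
    ∃ (t : A) (p : MvPolynomial (Fin s) A), t ∉ M ∧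
      C (algebraMap A K t) * map (algebraMap ↥(locAway A K {a : A | a ∉ M}) K) g =
        map (algebraMap A K) p := by
  induction g using MvPolynomial.induction_on with
  | C x =>
      obtain ⟨t, a, ht, hta⟩ := locAway_rep M hM x.2
      refine ⟨t, C a, ht, ?_⟩
      rw [map_C, map_C, ← C_mul]
      exact congrArg C (by rw [Subalgebra.algebraMap_eq]; simpa using hta)
  | add g₁ g₂ ih₁ ih₂ =>
      obtain ⟨t, p, ht, hp⟩ := ih₁
      obtain ⟨t', p', ht', hp'⟩ := ih₂
      refine ⟨t * t', C t' * p + C t * p',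
        fun hmem => ((hM.mem_or_mem hmem).elim ht ht'), ?_⟩
      simp only [map_add, map_mul, map_C]
      linear_combination C (algebraMap A K t') * hp + C (algebraMap A K t) * hp'
  | mul_X g i ih =>
      obtain ⟨t, p, ht, hp⟩ := ih
      refine ⟨t, p * X i, ht, ?_⟩
      simp only [map_mul, map_X]
      linear_combination X (R := K) i * hp

end aux

open MvPolynomial in
theorem stmt11 (A K : Type*) [CommRing A] [IsDomain A] [IsNoetherianRing A]
    [Field K] [Algebra A K] [IsFractionRing A K]
    (s : ℕ) (b : Fin (s + 1) → A) (f : A) (hb0 : b 0 = f) (hf : f ≠ 0)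
    (I : Ideal A) (hI : I = Ideal.span (Set.range b))
    (h : ∀ M : Ideal A, M.IsMaximal →
      (davisIdeal (↥(locAway A K {x : A | x ∉ M})) s
          ⟨algebraMap A K f, Subalgebra.algebraMap_mem _ f⟩
          (fun i => ⟨algebraMap A K (b i.succ), Subalgebra.algebraMap_mem _ _⟩)).IsPrime ∧
      RingHom.ker (davisHom (↥(locAway A K {x : A | x ∉ M})) K s
          ⟨algebraMap A K f, Subalgebra.algebraMap_mem _ f⟩
          fun i => ⟨algebraMap A K (b i.succ), Subalgebra.algebraMap_mem _ _⟩) =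
        davisIdeal (↥(locAway A K {x : A | x ∉ M})) s
          ⟨algebraMap A K f, Subalgebra.algebraMap_mem _ f⟩
          fun i => ⟨algebraMap A K (b i.succ), Subalgebra.algebraMap_mem _ _⟩) :
    RingHom.ker (davisHom A K s f fun i => b i.succ) =
      (davisIdeal A s f fun i => b i.succ) ∧
    (davisIdeal A s f fun i => b i.succ).IsPrime := by
  classical
  set c : Fin s → A := fun i => b i.succ with hc
  have hinj : Function.Injective (algebraMap A K) := IsFractionRing.injective A K
  have hfK : algebraMap A K f ≠ 0 := fun h0 => hf (hinj (by simpa using h0))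
  -- J' ⊆ ker β
  have hJle : davisIdeal A s f c ≤ RingHom.ker (davisHom A K s f c) := by
    rw [davisIdeal, Ideal.span_le]
    rintro _ ⟨i, rfl⟩
    simp only [SetLike.mem_coe, RingHom.mem_ker]
    simp only [davisHom, map_sub, map_mul, aeval_C, aeval_X]
    rw [mul_div_cancel₀ _ hfK, sub_self]
  have hker : RingHom.ker (davisHom A K s f c) = davisIdeal A s f c := by
    refine le_antisymm ?_ hJle
    intro p hp
    set Itot : Ideal A := Ideal.comap (C : A →+* MvPolynomial (Fin s) A)
        ((davisIdeal A s f c).colon (Ideal.span {p})) with hItot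
    have htop : Itot = ⊤ := by
      by_contra hne
      obtain ⟨M, hM, hle⟩ := Ideal.exists_le_maximal Itot hne
      set S := locAway A K {x : A | x ∉ M} with hS
      set fS : ↥S := ⟨algebraMap A K f, Subalgebra.algebraMap_mem _ f⟩ with hfS
      set cS : Fin s → ↥S := fun i => ⟨algebraMap A K (c i), Subalgebra.algebraMap_mem _ _⟩
        with hcS
      -- the image of p in S[y] lies in the kernel of the localized β
      have hmem : MvPolynomial.map (algebraMap A ↥S) p ∈
          RingHom.ker (davisHom ↥S K s fS cS) := by
        rw [RingHom.mem_ker]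
        have := MvPolynomial.aeval_map_algebraMap (A := ↥S) (R := A)
          (fun i => algebraMap ↥S K (cS i) / algebraMap ↥S K fS) p
        rw [davisHom, this]
        have hv : (fun i => algebraMap ↥S K (cS i) / algebraMap ↥S K fS) =
            fun i => algebraMap A K (c i) / algebraMap A K f := rfl
        rw [hv]
        exact hp
      rw [(h M hM).2] at hmem
      rw [davisIdeal, Ideal.mem_span_range_iff_exists_fun] at hmem
      obtain ⟨g, hg⟩ := hmem
      choose t q ht hq using fun i => clear_denoms M hM.isPrime (g i)
      set T : A := ∏ i, t i with hT
      have hTM : T ∉ M := by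
        intro hTmem
        obtain ⟨i, _, hi⟩ := (Ideal.IsPrime.prod_mem_iff (hp := hM.isPrime)).1 hTmem
        exact ht i hi
      -- show C T * p ∈ J'
      have hCTp : C T * p ∈ davisIdeal A s f c := by
        have key : C T * p = ∑ i, (C (∏ j ∈ Finset.univ.erase i, t j) * q i) *
            (C f * X i - C (c i)) := by
          apply MvPolynomial.map_injective (algebraMap A K) hinj
          have hmap : MvPolynomial.map (algebraMap A K) p =
              MvPolynomial.map (algebraMap ↥S K) (MvPolynomial.map (algebraMap A ↥S) p) := by
            rw [MvPolynomial.map_map, ← IsScalarTower.algebraMap_eq]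
          rw [map_mul, map_C, hmap, ← hg]
          rw [map_sum, map_sum]
          rw [Finset.mul_sum]
          refine Finset.sum_congr rfl fun i _ => ?_
          have hL : MvPolynomial.map (algebraMap ↥S K) (C fS * X i - C (cS i)) =
              C (algebraMap A K f) * X i - C (algebraMap A K (c i)) := by
            rw [map_sub, map_mul, map_C, map_C, map_X, Subalgebra.algebraMap_eq]
            rfl
          have hfac : algebraMap A K T = algebraMap A K (∏ j ∈ Finset.univ.erase i, t j) *
              algebraMap A K (t i) := by
            rw [← map_mul, hT, ← Finset.prod_erase_mul Finset.univ t (Finset.mem_univ i)]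
          rw [map_mul (MvPolynomial.map (algebraMap ↥S K)), hL]
          rw [map_mul (MvPolynomial.map (algebraMap A K)), map_mul (MvPolynomial.map (algebraMap A K)), map_C]
          rw [show (MvPolynomial.map (algebraMap A K)) (C f * X i - C (c i)) =
              C (algebraMap A K f) * X i - C (algebraMap A K (c i)) by
            rw [map_sub, map_mul, map_C, map_C, map_X]]
          rw [hfac, C_mul]
          linear_combination (C (algebraMap A K (∏ j ∈ Finset.univ.erase i, t j)) *
            (C (algebraMap A K f) * X i - C (algebraMap A K (c i)))) * (hq i)
        rw [key]
        exact Ideal.sum_mem _ fun i _ => Ideal.mul_mem_left _ _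
          (Ideal.subset_span ⟨i, rfl⟩)
      have : T ∈ Itot := by
        rw [hItot, Ideal.mem_comap, Ideal.mem_colon_span_singleton]
        exact hCTp
      exact hTM (hle this)
    have h1 : (1 : A) ∈ Itot := htop ▸ Submodule.mem_top
    rw [hItot, Ideal.mem_comap, Ideal.mem_colon_span_singleton, map_one, one_mul] at h1
    exact h1
  exact ⟨hker, hker ▸ RingHom.ker_isPrime _⟩
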